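/- Let B be an abelian group with a family of homomorphisms r_v : B → T_v to torsion abelian groups (v ∈ V), and suppose that for every finite list of infinite-order, ℤ-linearly independent elements R1, ..., Rs ∈ B, every prime ℓ, and every list of natural numbers k1, ..., ks, there exist infinitely many v such that r_v(R_t) has order exactly ℓ^{k_t} for each t. Let P1, ..., Pn, Q1, ..., Qn ∈ B have infinite order and suppose B is torsion-free. Assume that for every prime ℓ, for all positive integers m1, ..., mn and all but finitely many v: m1·r_v(P1) + ... + mn·r_v(Pn) = 0 implies m1·r_v(Q1) + ... + mn·r_v(Qn) = 0. Then there exists a nonzero integer e such that Q_i = e·P_i for every i ∈ {1, ..., n}. -/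

import Mathlib

section helpers
variable {B : Type*} [AddCommGroup B] [NoZeroSMulDivisors ℤ B]

/-- auxiliary: dependence of two elements -/
def MyDep (x y : B) : Prop := ∃ α β : ℤ, ¬(α = 0 ∧ β = 0) ∧ α • x = β • y

lemma my_notfin {x : B} (hx : x ≠ 0) : ¬ IsOfFinAddOrder x := by
  intro h
  obtain ⟨m, hm, hmx⟩ := isOfFinAddOrder_iff_nsmul_eq_zero.mp h
  have : (m : ℤ) • x = 0 := by rw [natCast_zsmul]; exact hmx
  rcases smul_eq_zero.mp this with h | h
  · simp at h; omega
  · exact hx h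

lemma my_zsmul_ne {a : ℤ} (ha : a ≠ 0) {x : B} (hx : x ≠ 0) : a • x ≠ 0 := by
  intro h; rcases smul_eq_zero.mp h with h | h
  · exact ha h
  · exact hx h

lemma my_li_single {x : B} (hx : x ≠ 0) : LinearIndependent ℤ (fun _ : Fin 1 => x) := by
  rw [Fintype.linearIndependent_iff]
  intro g hg
  simp only [Fin.sum_univ_one] at hg
  have h0 : g 0 = 0 := by
    rcases smul_eq_zero.mp hg with h | h
    · exact h
    · exact absurd h hx
  intro i
  fin_cases i
  exact h0

lemma my_cancel {a : ℤ} (ha : a ≠ 0) {x y : B} (h : a • x = a • y) : x = y := by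
  have : a • (x - y) = 0 := by rw [smul_sub, h, sub_self]
  rcases smul_eq_zero.mp this with h' | h'
  · exact absurd h' ha
  · exact sub_eq_zero.mp h'

end helpers

section sp
variable {B V : Type*} [AddCommGroup B] [NoZeroSMulDivisors ℤ B]
  {T : V → Type*} [∀ v, AddCommGroup (T v)]

lemma mySP (r : ∀ v, B →+ T v)
    (hmain : ∀ (s : ℕ) (R : Fin s → B), (∀ t, ¬ IsOfFinAddOrder (R t)) →
      LinearIndependent ℤ R → ∀ ℓ : ℕ, ℓ.Prime → ∀ k : Fin s → ℕ,
      {v : V | ∀ t, addOrderOf (r v (R t)) = ℓ ^ k t}.Infinite)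
    (A C : B)
    (H : ∀ ℓ : ℕ, ℓ.Prime → ∀ s : ℕ, 0 < s →
      {v : V | ¬ (s • r v A = 0 → s • r v C = 0)}.Finite) :
    ∃ e : ℤ, C = e • A := by
  by_cases hC : C = 0
  · exact ⟨0, by simp [hC]⟩
  by_cases hA : A = 0
  · exfalso
    have hli : LinearIndependent ℤ (fun _ : Fin 1 => C) := by
      rw [Fintype.linearIndependent_iff]
      intro g hg
      simp only [Fin.sum_univ_one] at hg
      have h0 : g 0 = 0 := by
        rcases smul_eq_zero.mp hg with h | h
        · exact h
        · exact absurd h hC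
      intro i
      fin_cases i
      exact h0
    have hinf := hmain 1 (fun _ => C) (fun _ => my_notfin hC) hli 2 Nat.prime_two (fun _ => 1)
    obtain ⟨v, hv, hbad⟩ := (hinf.diff (H 2 Nat.prime_two 1 one_pos)).nonempty
    have himp := not_not.mp hbad
    have hrA : (1 : ℕ) • r v A = 0 := by simp [hA]
    have hrC := himp hrA
    rw [one_nsmul] at hrC
    have := hv 0
    rw [hrC] at this
    simp at this
  -- dependence
  have hdep : ∃ α β : ℤ, ¬(α = 0 ∧ β = 0) ∧ α • C = β • A := by
    by_contra hnd
    push_neg at hnd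
    have hli : LinearIndependent ℤ ![A, C] := by
      rw [Fintype.linearIndependent_iff]
      intro g hg
      rw [Fin.sum_univ_two] at hg
      simp only [Matrix.cons_val_zero, Matrix.cons_val_one, Matrix.head_cons] at hg
      have hrel : (g 1) • C = (-(g 0)) • A := by
        rw [neg_smul]
        rw [eq_neg_iff_add_eq_zero, add_comm]
        exact hg
      by_cases hg1 : g 1 = 0 ∧ -(g 0) = 0
      · intro i
        fin_cases i
        · simpa using hg1.2
        · exact hg1.1
      · exact absurd hrel (hnd (g 1) (-(g 0)) (fun h1 h0 => hg1 ⟨h1, h0⟩))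
    have hfin : ∀ t : Fin 2, ¬ IsOfFinAddOrder (![A, C] t) := by
      intro t
      fin_cases t
      · exact my_notfin hA
      · exact my_notfin hC
    have hinf := hmain 2 ![A, C] hfin hli 2 Nat.prime_two ![0, 1]
    obtain ⟨v, hv, hbad⟩ := (hinf.diff (H 2 Nat.prime_two 1 one_pos)).nonempty
    have himp := not_not.mp hbad
    have h0 : addOrderOf (r v A) = 1 := by simpa using hv 0
    have h1 : addOrderOf (r v C) = 2 := by simpa using hv 1
    have hrA : (1 : ℕ) • r v A = 0 := by
      rw [one_nsmul]
      exact (AddMonoid.addOrderOf_eq_one_iff).mp h0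
    have hrC := himp hrA
    rw [one_nsmul] at hrC
    rw [hrC] at h1
    simp at h1
  obtain ⟨α, β, hab, hrel⟩ := hdep
  have hα : α ≠ 0 := by
    intro h0
    rw [h0, zero_smul] at hrel
    have hβ : β = 0 := by
      rcases smul_eq_zero.mp hrel.symm with h | h
      · exact h
      · exact absurd h hA
    exact hab ⟨h0, hβ⟩
  have hβ : β ≠ 0 := by
    intro h0
    rw [h0, zero_smul] at hrel
    exact my_zsmul_ne hα hC hrel
  set g : ℕ := Int.gcd α β with hgdef
  have hgpos : 0 < g := Int.gcd_pos_of_ne_zero_left β hα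
  set α₁ : ℤ := α / g with ha1
  set β₁ : ℤ := β / g with hb1
  have hαg : (g : ℤ) * α₁ = α := Int.mul_ediv_cancel' (Int.gcd_dvd_left _ _)
  have hβg : (g : ℤ) * β₁ = β := Int.mul_ediv_cancel' (Int.gcd_dvd_right _ _)
  have hcop : Int.gcd α₁ β₁ = 1 := Int.gcd_div_gcd_div_gcd hgpos
  have hrel1 : α₁ • C = β₁ • A := by
    apply my_cancel (a := (g : ℤ)) (by exact_mod_cast hgpos.ne')
    rw [smul_smul, smul_smul, hαg, hβg]
    exact hrel
  have hα₁ : α₁ ≠ 0 := by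
    intro h0
    rw [← hαg, h0, mul_zero] at hα
    exact hα rfl
  have hβ₁ : β₁ ≠ 0 := by
    intro h0
    rw [← hβg, h0, mul_zero] at hβ
    exact hβ rfl
  -- claim α₁ = ±1
  have hunit : α₁.natAbs = 1 := by
    by_contra hne
    obtain ⟨ℓ, hℓ, hdvd⟩ := Nat.exists_prime_and_dvd hne
    have hdvdz : (ℓ : ℤ) ∣ α₁ := Int.natCast_dvd_natCast.mpr hdvd |>.trans (Int.natAbs_dvd.mpr dvd_rfl)
    obtain ⟨t, ht⟩ := hdvdz
    -- find v with addOrderOf (r v A) = ℓ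
    have hli : LinearIndependent ℤ (fun _ : Fin 1 => A) := by
      rw [Fintype.linearIndependent_iff]
      intro g' hg'
      simp only [Fin.sum_univ_one] at hg'
      have h0 : g' 0 = 0 := by
        rcases smul_eq_zero.mp hg' with h | h
        · exact h
        · exact absurd h hA
      intro i
      fin_cases i
      exact h0
    have hinf := hmain 1 (fun _ => A) (fun _ => my_notfin hA) hli ℓ hℓ (fun _ => 1)
    obtain ⟨v, hv, hbad⟩ := (hinf.diff (H ℓ hℓ ℓ hℓ.pos)).nonempty
    have hord : addOrderOf (r v A) = ℓ := by simpa using hv 0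
    have himp := not_not.mp hbad
    have hrA : ℓ • r v A = 0 := by rw [← hord]; exact addOrderOf_nsmul_eq_zero _
    have hrC := himp hrA
    -- α₁ • r v C = β₁ • r v A
    have hmap : α₁ • r v C = β₁ • r v A := by
      have := congrArg (r v) hrel1
      simpa [map_zsmul] using this
    have hzero : α₁ • r v C = 0 := by
      rw [ht, mul_comm, mul_smul, natCast_zsmul]
      rw [hrC, smul_zero]
    have hordA : (addOrderOf (r v A) : ℤ) ∣ β₁ := by
      rw [addOrderOf_dvd_iff_zsmul_eq_zero]
      rw [← hmap, hzero]
    rw [hord] at hordA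
    have hℓβ : ℓ ∣ β₁.natAbs := Int.natCast_dvd.mp hordA
    have : ℓ ∣ Int.gcd α₁ β₁ := Nat.dvd_gcd hdvd hℓβ
    rw [hcop] at this
    exact hℓ.one_lt.ne' (Nat.dvd_one.mp this)
  rcases Int.natAbs_eq_iff.mp hunit with h1 | h1
  · refine ⟨β₁, ?_⟩
    rw [h1] at hrel1
    simpa using hrel1
  · refine ⟨-β₁, ?_⟩
    rw [h1] at hrel1
    simp only [Nat.cast_one, neg_smul, one_smul] at hrel1
    rw [neg_smul, ← hrel1, neg_neg]

end sp

lemma nat_dvd_of_ppowers {a b : ℕ} (H : ∀ ℓ : ℕ, ℓ.Prime → ∀ j : ℕ, ℓ^j ∣ a → ℓ^j ∣ b) : a ∣ b := by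
  by_cases hb : b = 0
  · simp [hb]
  by_cases ha : a = 0
  · exfalso
    have h2 : (2:ℕ)^b ∣ b := H 2 Nat.prime_two b (by simp [ha])
    have hlt : b < 2^b := Nat.lt_two_pow_self
    have := Nat.le_of_dvd (Nat.pos_of_ne_zero hb) h2
    omega
  rw [← Nat.factorization_le_iff_dvd ha hb]
  intro p
  by_cases hp : p.Prime
  · have h1 : p ^ (a.factorization p) ∣ a := Nat.ordProj_dvd a p
    have h2 := H p hp (a.factorization p) h1
    exact (Nat.Prime.pow_dvd_iff_le_factorization hp hb).mp h2
  · simp [Nat.factorization_eq_zero_of_not_prime a hp]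

lemma int_dvd_of_ppowers {a b : ℤ} (H : ∀ ℓ : ℕ, ℓ.Prime → ∀ j : ℕ, (ℓ:ℤ)^j ∣ a → (ℓ:ℤ)^j ∣ b) : a ∣ b := by
  rw [← Int.natAbs_dvd_natAbs]
  apply nat_dvd_of_ppowers
  intro ℓ hℓ j hdvd
  have h1 : ((ℓ^j : ℕ) : ℤ) ∣ a := by
    rw [Int.natCast_dvd]
    simpa using hdvd
  have h2 := H ℓ hℓ j (by push_cast at h1 ⊢; exact h1)
  rw [show ((ℓ:ℤ)^j) = ((ℓ^j : ℕ) : ℤ) by push_cast; ring, Int.natCast_dvd] at h2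
  exact h2

lemma myNT {n : ℕ} (hn : 0 < n) (p s : Fin n → ℤ) (hp : ∀ i, p i ≠ 0)
    (H : ∀ m : Fin n → ℕ, (∀ i, 0 < m i) →
      (∑ i, (m i : ℤ) * p i) ∣ (∑ i, (m i : ℤ) * s i)) :
    ∃ e : ℤ, ∀ k, s k = e * p k := by
  have hbase : ∃ w : Fin n → ℕ, (∀ i, 0 < w i) ∧ (∑ i, (w i : ℤ) * p i) ≠ 0 := by
    by_cases h0 : (∑ i, p i) = 0
    · set i0 : Fin n := ⟨0, hn⟩
      refine ⟨fun i => if i = i0 then 2 else 1, fun i => by dsimp only; split <;> norm_num, ?_⟩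
      have : ∀ i ∈ Finset.univ, (((if i = i0 then 2 else 1 : ℕ)) : ℤ) * p i
          = p i + (if i = i0 then p i else 0) := by
        intro i _; split <;> push_cast <;> ring
      rw [Finset.sum_congr rfl this, Finset.sum_add_distrib]
      rw [Finset.sum_ite_eq' Finset.univ i0 (fun i => p i)]
      simp [h0, hp i0]
    · refine ⟨fun _ => 1, fun i => one_pos, ?_⟩
      simpa using h0
  obtain ⟨w, hwpos, hwne⟩ := hbase
  set a : ℤ := ∑ i, (w i : ℤ) * p i with ha
  set b : ℤ := ∑ i, (w i : ℤ) * s i with hb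
  have hdvd : a ∣ b := H w hwpos
  set e : ℤ := b / a with he
  have hbe : a * e = b := Int.mul_ediv_cancel' hdvd
  refine ⟨e, fun k => ?_⟩
  have key : ∀ t : ℕ, (a + t * p k) ∣ (b + t * s k) := by
    intro t
    have hpos : ∀ i, 0 < w i + (if i = k then t else 0) := fun i => by
      have := hwpos i; split <;> omega
    have hH := H (fun i => w i + if i = k then t else 0) hpos
    have hsum : ∀ (q : Fin n → ℤ), (∑ i, ((w i + if i = k then t else 0 : ℕ) : ℤ) * q i)
        = (∑ i, (w i : ℤ) * q i) + t * q k := by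
      intro q
      have : ∀ i ∈ Finset.univ, ((w i + if i = k then t else 0 : ℕ) : ℤ) * q i
          = (w i : ℤ) * q i + (if i = k then (t : ℤ) * q i else 0) := by
        intro i _; split <;> push_cast <;> ring
      rw [Finset.sum_congr rfl this, Finset.sum_add_distrib,
        Finset.sum_ite_eq' Finset.univ k (fun i => (t : ℤ) * q i)]
      simp
    rw [hsum p, hsum s] at hH
    exact hH
  have hΔ : ∀ t : ℕ, (a + t * p k) ∣ (p k * b - s k * a) := by
    intro t
    have h1 : (a + t * p k) ∣ (p k * (b + t * s k) - s k * (a + t * p k)) :=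
      dvd_sub ((key t).mul_left _) (dvd_mul_left _ _)
    have : p k * (b + t * s k) - s k * (a + t * p k) = p k * b - s k * a := by ring
    rwa [this] at h1
  have hzero : p k * b - s k * a = 0 := by
    by_contra hne
    set Δ : ℤ := p k * b - s k * a with hΔdef
    set t : ℕ := Δ.natAbs + a.natAbs + 1 with ht
    have hd := hΔ t
    have hlt : |Δ| < |a + t * p k| := by
      have h1 : |(t : ℤ) * p k| - |a| ≤ |a + t * p k| := by
        have hh := abs_add_le (a + (t : ℤ) * p k) (-a)
        have heq : a + (t : ℤ) * p k + (-a) = (t : ℤ) * p k := by ring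
        rw [heq, abs_neg] at hh
        linarith
      have h2 : (t : ℤ) ≤ |(t : ℤ) * p k| := by
        rw [abs_mul]
        have hpk : 1 ≤ |p k| := by
          have := abs_pos.mpr (hp k); omega
        have habs : |(t:ℤ)| = (t:ℤ) := abs_of_nonneg (by positivity)
        nlinarith [abs_nonneg (t:ℤ)]
      have h3 : (t : ℤ) = (Δ.natAbs : ℤ) + (a.natAbs : ℤ) + 1 := by
        rw [ht]; push_cast; ring
      have h4 : |Δ| = (Δ.natAbs : ℤ) := Int.abs_eq_natAbs Δ
      have h5 : |a| = (a.natAbs : ℤ) := Int.abs_eq_natAbs a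
      linarith
    have hle : (a + t * p k).natAbs ≤ Δ.natAbs :=
      Nat.le_of_dvd (Int.natAbs_pos.mpr hne) (Int.natAbs_dvd_natAbs.mpr hd)
    have h6 : |a + t * p k| = ((a + t * p k).natAbs : ℤ) := Int.abs_eq_natAbs _
    have h7 : |Δ| = (Δ.natAbs : ℤ) := Int.abs_eq_natAbs Δ
    have h8 : ((a + t * p k).natAbs : ℤ) ≤ (Δ.natAbs : ℤ) := by exact_mod_cast hle
    linarith
  -- conclude s k = e * p k
  have hfin : a * (s k - e * p k) = 0 := by
    linear_combination (-1 : ℤ) * hzero - p k * hbe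
  rcases mul_eq_zero.mp hfin with h | h
  · exact absurd h hwne
  · linarith [sub_eq_zero.mp h]

lemma common_gen {B : Type*} [AddCommGroup B] [NoZeroSMulDivisors ℤ B]
    {ι : Type*} [Fintype ι] [DecidableEq ι] (z : B) (hz : z ≠ 0) (x : ι → B)
    (hx : ∀ i, ∃ α β : ℤ, α ≠ 0 ∧ β ≠ 0 ∧ α • x i = β • z) :
    ∃ (G : B) (h : ι → ℤ), G ≠ 0 ∧ ∀ i, x i = h i • G := by
  suffices claim : ∀ s : Finset ι, ∃ (G : B) (h : ι → ℤ) (A d : ℤ), A ≠ 0 ∧ d ≠ 0 ∧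
      A • G = d • z ∧ ∀ i ∈ s, x i = h i • G by
    obtain ⟨G, h, A, d, hA, hd, hGz, hxs⟩ := claim Finset.univ
    refine ⟨G, h, ?_, fun i => hxs i (Finset.mem_univ i)⟩
    intro hG0
    rw [hG0, smul_zero] at hGz
    exact my_zsmul_ne hd hz hGz.symm
  intro s
  induction s using Finset.induction_on with
  | empty => exact ⟨z, fun _ => 0, 1, 1, one_ne_zero, one_ne_zero, rfl, by simp⟩
  | @insert a s ha ih =>
    obtain ⟨G, h, A, d, hA, hd, hGz, hxs⟩ := ih
    obtain ⟨α, β, hα, hβ, hrel⟩ := hx a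
    have h1 : (α * A) • x a = (A * β) • z := by
      rw [mul_comm α A, mul_smul, hrel, mul_smul]
    have h2 : (α * A) • G = (α * d) • z := by
      rw [mul_smul, hGz, mul_smul]
    set g : ℕ := Int.gcd (A * β) (α * d) with hgdef
    have hgpos : 0 < g := Int.gcd_pos_of_ne_zero_left _ (mul_ne_zero hA hβ)
    have hgne : (g : ℤ) ≠ 0 := by exact_mod_cast hgpos.ne'
    set c₁ : ℤ := Int.gcdA (A * β) (α * d) with hc1
    set c₂ : ℤ := Int.gcdB (A * β) (α * d) with hc2
    have hbez : (g : ℤ) = (A * β) * c₁ + (α * d) * c₂ := Int.gcd_eq_gcd_ab _ _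
    set G' : B := c₁ • x a + c₂ • G with hG'def
    have hαA : α * A ≠ 0 := mul_ne_zero hα hA
    have hG' : (α * A) • G' = (g : ℤ) • z := by
      rw [hG'def, smul_add, smul_comm (α * A) c₁, smul_comm (α * A) c₂, h1, h2,
        smul_smul, smul_smul, ← add_smul]
      congr 1
      rw [hbez]; ring
    have hdvd1 : (g : ℤ) ∣ (A * β) := Int.gcd_dvd_left _ _
    have hdvd2 : (g : ℤ) ∣ (α * d) := Int.gcd_dvd_right _ _
    have hxa : x a = ((A * β) / g) • G' := by
      apply my_cancel hαA
      rw [smul_comm (α * A) ((A * β) / g), hG', smul_smul,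
        Int.ediv_mul_cancel hdvd1, h1]
    have hGG : G = ((α * d) / g) • G' := by
      apply my_cancel hαA
      rw [smul_comm (α * A) ((α * d) / g), hG', smul_smul,
        Int.ediv_mul_cancel hdvd2, h2]
    refine ⟨G', fun i => if i = a then (A * β) / g else h i * ((α * d) / g),
      α * A, g, hαA, hgne, hG', ?_⟩
    intro i hi
    rcases Finset.mem_insert.mp hi with h' | h'
    · simp only [h', if_pos rfl]
      exact hxa
    · have hne : i ≠ a := fun hcon => ha (hcon ▸ h')
      simp only [if_neg hne]
      rw [mul_smul, ← hGG]
      exact hxs i h'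

section collinear
variable {B : Type*} [AddCommGroup B] [NoZeroSMulDivisors ℤ B]

lemma mydep_extract {X Pi : B} (hPi : Pi ≠ 0) (h : MyDep X Pi) :
    ∃ α β : ℤ, α ≠ 0 ∧ α • X = β • Pi := by
  obtain ⟨α, β, hab, hrel⟩ := h
  by_cases hα : α = 0
  · exfalso
    rw [hα, zero_smul] at hrel
    have hβ : β = 0 := by
      rcases smul_eq_zero.mp hrel.symm with h' | h'
      · exact h'
      · exact absurd h' hPi
    exact hab ⟨hα, hβ⟩
  · exact ⟨α, β, hα, hrel⟩

lemma three_collinear (S Pk Pl Pi : B) (hPi : Pi ≠ 0) (j1 j2 j3 : ℤ)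
    (h12 : j1 ≠ j2) (h13 : j1 ≠ j3) (h23 : j2 ≠ j3)
    (H1 : MyDep (S + j1 • Pk + (j1 * j1) • Pl) Pi)
    (H2 : MyDep (S + j2 • Pk + (j2 * j2) • Pl) Pi)
    (H3 : MyDep (S + j3 • Pk + (j3 * j3) • Pl) Pi) :
    MyDep Pk Pl := by
  obtain ⟨α1, β1, hα1, e1⟩ := mydep_extract hPi H1
  obtain ⟨α2, β2, hα2, e2⟩ := mydep_extract hPi H2
  obtain ⟨α3, β3, hα3, e3⟩ := mydep_extract hPi H3
  set u1 : ℤ := α1 * α2 * (j1 - j2) with hu1def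
  set v1 : ℤ := α1 * α2 * (j1 * j1 - j2 * j2) with hv1def
  set w1 : ℤ := α2 * β1 - α1 * β2 with hw1def
  set u2 : ℤ := α1 * α3 * (j1 - j3) with hu2def
  set v2 : ℤ := α1 * α3 * (j1 * j1 - j3 * j3) with hv2def
  set w2 : ℤ := α3 * β1 - α1 * β3 with hw2def
  have E1 : u1 • Pk + v1 • Pl = w1 • Pi := by
    rw [hu1def, hv1def, hw1def]
    linear_combination (norm := module) α2 • e1 - α1 • e2
  have E2 : u2 • Pk + v2 • Pl = w2 • Pi := by
    rw [hu2def, hv2def, hw2def]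
    linear_combination (norm := module) α3 • e1 - α1 • e3
  have E3 : (w2 * u1 - w1 * u2) • Pk + (w2 * v1 - w1 * v2) • Pl = 0 := by
    linear_combination (norm := module) w2 • E1 - w1 • E2
  have hu1 : u1 ≠ 0 := mul_ne_zero (mul_ne_zero hα1 hα2) (sub_ne_zero.mpr h12)
  by_cases hc : w2 * u1 - w1 * u2 = 0 ∧ w2 * v1 - w1 * v2 = 0
  · have hD : v2 * u1 - v1 * u2 ≠ 0 := by
      have hcalc : v2 * u1 - v1 * u2
          = α1 * α1 * α2 * α3 * ((j1 - j2) * (j1 - j3) * (j3 - j2)) := by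
        rw [hu1def, hv1def, hu2def, hv2def]; ring
      rw [hcalc]
      exact mul_ne_zero (mul_ne_zero (mul_ne_zero (mul_ne_zero hα1 hα1) hα2) hα3)
        (mul_ne_zero (mul_ne_zero (sub_ne_zero.mpr h12) (sub_ne_zero.mpr h13))
          (sub_ne_zero.mpr (fun h => h23 h.symm)))
    have hw1 : w1 = 0 := by
      have hcalc : w1 * (v2 * u1 - v1 * u2)
          = v1 * (w2 * u1 - w1 * u2) - u1 * (w2 * v1 - w1 * v2) := by ring
      rw [hc.1, hc.2] at hcalc
      simp only [mul_zero, sub_zero, zero_sub, neg_zero] at hcalc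
      rcases mul_eq_zero.mp hcalc with h' | h'
      · exact h'
      · exact absurd h' hD
    rw [hw1, zero_smul] at E1
    refine ⟨u1, -v1, fun h => hu1 h.1, ?_⟩
    linear_combination (norm := module) E1
  · refine ⟨w2 * u1 - w1 * u2, -(w2 * v1 - w1 * v2),
      fun h => hc ⟨h.1, neg_eq_zero.mp h.2⟩, ?_⟩
    linear_combination (norm := module) E3

end collinear

section main
variable {B V : Type*} [AddCommGroup B] [NoZeroSMulDivisors ℤ B]
  {T : V → Type*} [∀ v, AddCommGroup (T v)]

theorem stmt_9' 
    (htors : ∀ v, ∀ t : T v, IsOfFinAddOrder t)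
    (r : ∀ v, B →+ T v)
    (hmain : ∀ (s : ℕ) (R : Fin s → B), (∀ t, ¬ IsOfFinAddOrder (R t)) →
      LinearIndependent ℤ R → ∀ ℓ : ℕ, ℓ.Prime → ∀ k : Fin s → ℕ,
      {v : V | ∀ t, addOrderOf (r v (R t)) = ℓ ^ k t}.Infinite)
    (n : ℕ) (P Q : Fin n → B)
    (hP : ∀ i, ¬ IsOfFinAddOrder (P i)) (hQ : ∀ i, ¬ IsOfFinAddOrder (Q i))
    (hsupp : ∀ ℓ : ℕ, ℓ.Prime → ∀ m : Fin n → ℕ, (∀ i, 0 < m i) →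
      {v : V | ¬ ((∑ i, m i • r v (P i)) = 0 → (∑ i, m i • r v (Q i)) = 0)}.Finite) :
    ∃ e : ℤ, e ≠ 0 ∧ ∀ i, Q i = e • P i := by
  classical
  rcases Nat.eq_zero_or_pos n with hn | hn
  · subst hn
    exact ⟨1, one_ne_zero, fun i => i.elim0⟩
  have hP0 : ∀ i, P i ≠ 0 := fun i h => hP i (by rw [h]; exact IsOfFinAddOrder.zero)
  have hQ0 : ∀ i, Q i ≠ 0 := fun i h => hQ i (by rw [h]; exact IsOfFinAddOrder.zero)
  -- pairwise support problem along positive combinations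
  have SP' : ∀ m : Fin n → ℕ, (∀ i, 0 < m i) →
      ∃ e : ℤ, (∑ i, m i • Q i) = e • (∑ i, m i • P i) := by
    intro m hm
    apply mySP r hmain
    intro ℓ hℓ s hs
    have hfin := hsupp ℓ hℓ (fun i => s * m i) (fun i => Nat.mul_pos hs (hm i))
    apply hfin.subset
    intro v hv
    simp only [Set.mem_setOf_eq] at hv ⊢
    have hA : ∀ (X : Fin n → B),
        (∑ i, (s * m i) • r v (X i)) = s • r v (∑ i, m i • X i) := by
      intro X
      rw [map_sum, Finset.smul_sum]
      exact Finset.sum_congr rfl (fun i _ => by rw [map_nsmul, mul_smul])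
    rw [hA P, hA Q]
    exact hv
  -- sum splitting helper
  have hsum : ∀ (w : Fin n → ℕ) (t : ℕ) (i : Fin n) (X : Fin n → B),
      (∑ i', (w i' + if i' = i then t else 0) • X i')
        = (∑ i', w i' • X i') + (t : ℤ) • X i := by
    intro w t i X
    have h1 : ∀ i' ∈ Finset.univ, (w i' + if i' = i then t else 0) • X i'
        = w i' • X i' + (if i' = i then t • X i' else 0) := by
      intro i' _
      split
      · rw [add_smul]
      · simp
    rw [Finset.sum_congr rfl h1, Finset.sum_add_distrib,
      Finset.sum_ite_eq' Finset.univ i (fun i' => t • X i')]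
    simp only [Finset.mem_univ, if_true]
    rw [natCast_zsmul]
  by_cases hdep : ∀ k l, MyDep (P k) (P l)
  · -- everything on one line
    set i0 : Fin n := ⟨0, hn⟩ with hi0
    have hz : P i0 ≠ 0 := hP0 i0
    have hPrel : ∀ i, ∃ α β : ℤ, α ≠ 0 ∧ β ≠ 0 ∧ α • P i = β • P i0 := by
      intro i
      obtain ⟨α, β, hα, hrel⟩ := mydep_extract hz (hdep i i0)
      refine ⟨α, β, hα, ?_, hrel⟩
      intro hβ0
      rw [hβ0, zero_smul] at hrel
      exact my_zsmul_ne hα (hP0 i) hrel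
    have hSrel : ∀ s : Finset (Fin n), ∃ A Bz : ℤ, A ≠ 0 ∧
        A • (∑ i ∈ s, P i) = Bz • P i0 := by
      intro s
      induction s using Finset.induction_on with
      | empty => exact ⟨1, 0, one_ne_zero, by simp⟩
      | @insert a s ha ih =>
        obtain ⟨A, Bz, hA, hrel⟩ := ih
        obtain ⟨αa, βa, hαa, hβa, hrela⟩ := hPrel a
        refine ⟨αa * A, A * βa + αa * Bz, mul_ne_zero hαa hA, ?_⟩
        rw [Finset.sum_insert ha]
        linear_combination (norm := module) A • hrela + αa • hrel
    obtain ⟨A, Bz, hA, hS⟩ := hSrel Finset.univ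
    obtain ⟨e0, he0⟩ := SP' (fun _ => 1) (fun _ => one_pos)
    simp only [one_smul] at he0
    have hQrel : ∀ i, ∃ c d : ℤ, c ≠ 0 ∧ d ≠ 0 ∧ c • Q i = d • P i0 := by
      intro i
      obtain ⟨e1, he1⟩ := SP' (fun i' => 1 + if i' = i then 1 else 0)
        (fun i' => Nat.lt_of_lt_of_le Nat.one_pos (Nat.le_add_right 1 _))
      have he1' : (∑ i', ((1:ℕ) + if i' = i then 1 else 0) • Q i')
          = e1 • (∑ i', ((1:ℕ) + if i' = i then 1 else 0) • P i') := he1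
      rw [hsum (fun _ => 1) 1 i Q, hsum (fun _ => 1) 1 i P] at he1'
      simp only [one_smul, Nat.cast_one] at he1'
      obtain ⟨αi, βi, hαi, hβi, hreli⟩ := hPrel i
      have hrelQ : (A * αi) • Q i
          = ((e1 - e0) * (αi * Bz) + e1 * (A * βi)) • P i0 := by
        linear_combination (norm := module) (A * αi) • he1' - (A * αi) • he0
          + ((e1 - e0) * αi) • hS + (e1 * A) • hreli
      refine ⟨A * αi, _, mul_ne_zero hA hαi, ?_, hrelQ⟩
      intro h0
      rw [h0, zero_smul] at hrelQ
      exact my_zsmul_ne (mul_ne_zero hA hαi) (hQ0 i) hrelQ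
    obtain ⟨G, h, hG0, hxrel⟩ := common_gen (P i0) hz (Sum.elim P Q) (by
      intro i
      cases i with
      | inl i => exact hPrel i
      | inr i => exact hQrel i)
    have hPG : ∀ i, P i = h (Sum.inl i) • G := fun i => hxrel (Sum.inl i)
    have hQG : ∀ i, Q i = h (Sum.inr i) • G := fun i => hxrel (Sum.inr i)
    have hpne : ∀ i, h (Sum.inl i) ≠ 0 :=
      fun i h0 => hP0 i (by rw [hPG i, h0, zero_smul])
    have hqne : ∀ i, h (Sum.inr i) ≠ 0 :=
      fun i h0 => hQ0 i (by rw [hQG i, h0, zero_smul])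
    have hNT : ∀ m : Fin n → ℕ, (∀ i, 0 < m i) →
        (∑ i, (m i : ℤ) * h (Sum.inl i)) ∣ (∑ i, (m i : ℤ) * h (Sum.inr i)) := by
      intro m hm
      apply int_dvd_of_ppowers
      intro ℓ hℓ j hdvd
      have hinf := hmain 1 (fun _ => G) (fun _ => my_notfin hG0)
        (my_li_single hG0) ℓ hℓ (fun _ => j)
      obtain ⟨v, hv, hbad⟩ := (hinf.diff (hsupp ℓ hℓ m hm)).nonempty
      have hord : addOrderOf (r v G) = ℓ ^ j := hv 0
      have himp := not_not.mp hbad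
      have hsumv : ∀ (X : Fin n → B) (c : Fin n → ℤ), (∀ i, X i = c i • G) →
          (∑ i, m i • r v (X i)) = (∑ i, (m i : ℤ) * c i) • r v G := by
        intro X c hXc
        rw [Finset.sum_smul]
        apply Finset.sum_congr rfl
        intro i _
        rw [hXc i, map_zsmul, ← natCast_zsmul (c i • r v G) (m i), smul_smul]
      have hav : (∑ i, (m i : ℤ) * h (Sum.inl i)) • r v G = 0 := by
        apply addOrderOf_dvd_iff_zsmul_eq_zero.mp
        rw [hord]
        push_cast
        exact hdvd
      have h1 : (∑ i, m i • r v (P i)) = 0 := by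
        rw [hsumv P _ hPG]; exact hav
      have h2 := himp h1
      rw [hsumv Q _ hQG] at h2
      have h3 := addOrderOf_dvd_iff_zsmul_eq_zero.mpr h2
      rw [hord] at h3
      push_cast at h3
      exact h3
    obtain ⟨e, he⟩ := myNT hn _ _ hpne hNT
    refine ⟨e, ?_, fun i => ?_⟩
    · intro he0'
      have := he i0
      rw [he0', zero_mul] at this
      exact hqne i0 this
    · rw [hQG i, he i, mul_smul, ← hPG i]
  · -- generic case
    push_neg at hdep
    obtain ⟨k, l, hkl⟩ := hdep
    have hbadcard : ∀ i, ((Finset.range (2*n+1)).filter (fun j =>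
        MyDep ((∑ i', P i') + ((j:ℕ):ℤ) • P k + (((j:ℕ):ℤ) * ((j:ℕ):ℤ)) • P l) (P i))).card ≤ 2 := by
      intro i
      by_contra hc
      push_neg at hc
      obtain ⟨a, b, c, ha, hb, hcc, hab, hac, hbc⟩ := Finset.two_lt_card_iff.mp hc
      have hda := (Finset.mem_filter.mp ha).2
      have hdb := (Finset.mem_filter.mp hb).2
      have hdc := (Finset.mem_filter.mp hcc).2
      exact hkl (three_collinear (∑ i', P i') (P k) (P l) (P i) (hP0 i)
        (a : ℤ) (b : ℤ) (c : ℤ)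
        (by exact_mod_cast hab) (by exact_mod_cast hac) (by exact_mod_cast hbc)
        hda hdb hdc)
    have hex : ∃ j ∈ Finset.range (2*n+1), j ∉ Finset.univ.biUnion (fun i : Fin n =>
        (Finset.range (2*n+1)).filter (fun j =>
        MyDep ((∑ i', P i') + ((j:ℕ):ℤ) • P k + (((j:ℕ):ℤ) * ((j:ℕ):ℤ)) • P l) (P i))) := by
      by_contra hcon
      push_neg at hcon
      have hsub := Finset.card_le_card hcon
      have hle : (Finset.univ.biUnion (fun i : Fin n =>
          (Finset.range (2*n+1)).filter (fun j =>
          MyDep ((∑ i', P i') + ((j:ℕ):ℤ) • P k + (((j:ℕ):ℤ) * ((j:ℕ):ℤ)) • P l) (P i)))).card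
          ≤ 2 * n := by
        calc _ ≤ ∑ i : Fin n, ((Finset.range (2*n+1)).filter (fun j =>
              MyDep ((∑ i', P i') + ((j:ℕ):ℤ) • P k + (((j:ℕ):ℤ) * ((j:ℕ):ℤ)) • P l) (P i))).card :=
            Finset.card_biUnion_le
          _ ≤ ∑ _i : Fin n, 2 := Finset.sum_le_sum (fun i _ => hbadcard i)
          _ = 2 * n := by simp [mul_comm]
      rw [Finset.card_range] at hsub
      omega
    obtain ⟨j, hjmem, hjgood⟩ := hex
    have hgood : ∀ i, ¬ MyDep ((∑ i', P i') + ((j:ℕ):ℤ) • P k + (((j:ℕ):ℤ) * ((j:ℕ):ℤ)) • P l) (P i) := by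
      intro i hd
      exact hjgood (Finset.mem_biUnion.mpr ⟨i, Finset.mem_univ i,
        Finset.mem_filter.mpr ⟨hjmem, hd⟩⟩)
    set w : Fin n → ℕ := fun i => (1 + if i = k then j else 0) + (if i = l then j*j else 0) with hwdef
    have hwpos : ∀ i, 0 < w i := by
      intro i
      rw [hwdef]
      dsimp only
      have : (1:ℕ) ≤ 1 + (if i = k then j else 0) := Nat.le_add_right 1 _
      omega
    have hSw : ∀ (X : Fin n → B), (∑ i, w i • X i)
        = (∑ i, X i) + ((j:ℕ):ℤ) • X k + (((j:ℕ):ℤ) * ((j:ℕ):ℤ)) • X l := by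
      intro X
      have h1 : (∑ i', ((fun i => 1 + if i = k then j else 0) i' + if i' = l then j*j else 0) • X i')
          = (∑ i', (1 + if i' = k then j else 0) • X i') + ((j*j : ℕ) : ℤ) • X l :=
        hsum (fun i => 1 + if i = k then j else 0) (j*j) l X
      have h2 : (∑ i', ((1:ℕ) + if i' = k then j else 0) • X i')
          = (∑ i', (1:ℕ) • X i') + ((j:ℕ):ℤ) • X k := hsum (fun _ => 1) j k X
      rw [hwdef]
      rw [h1, h2]
      simp only [one_smul]
      rw [Nat.cast_mul]
    obtain ⟨e0, he0⟩ := SP' w hwpos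
    have key : ∀ i, Q i = e0 • P i := by
      intro i
      obtain ⟨e1, he1⟩ := SP' (fun i' => w i' + if i' = i then 1 else 0)
        (fun i' => Nat.lt_of_lt_of_le (hwpos i') (Nat.le_add_right _ _))
      obtain ⟨e2, he2⟩ := SP' (fun i' => w i' + if i' = i then 2 else 0)
        (fun i' => Nat.lt_of_lt_of_le (hwpos i') (Nat.le_add_right _ _))
      have he1' : (∑ i', (w i' + if i' = i then (1:ℕ) else 0) • Q i')
          = e1 • (∑ i', (w i' + if i' = i then (1:ℕ) else 0) • P i') := he1
      have he2' : (∑ i', (w i' + if i' = i then (2:ℕ) else 0) • Q i')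
          = e2 • (∑ i', (w i' + if i' = i then (2:ℕ) else 0) • P i') := he2
      rw [hsum w 1 i Q, hsum w 1 i P] at he1'
      rw [hsum w 2 i Q, hsum w 2 i P] at he2'
      simp only [Nat.cast_one, Nat.cast_ofNat, one_smul] at he1' he2'
      have hElim : (2*e1 - e0 - e2) • (∑ i', w i' • P i') = (2*e2 - 2*e1) • P i := by
        linear_combination (norm := module) he2' + he0 - (2:ℤ) • he1'
      by_cases hz2 : 2*e1 - e0 - e2 = 0 ∧ 2*e2 - 2*e1 = 0
      · have he21 : e2 = e1 := by omega
        have he10 : e1 = e0 := by omega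
        rw [he10] at he1'
        linear_combination (norm := module) he1' - he0
      · exfalso
        apply hgood i
        refine ⟨2*e1 - e0 - e2, 2*e2 - 2*e1, hz2, ?_⟩
        rw [← hSw P]
        exact hElim
    refine ⟨e0, ?_, key⟩
    intro h0
    exact hQ0 ⟨0, hn⟩ (by rw [key ⟨0, hn⟩, h0, zero_smul])

end main


theorem stmt_9 {B V : Type*} [AddCommGroup B] [NoZeroSMulDivisors ℤ B]
    {T : V → Type*} [∀ v, AddCommGroup (T v)]
    (htors : ∀ v, ∀ t : T v, IsOfFinAddOrder t)
    (r : ∀ v, B →+ T v)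
    (hmain : ∀ (s : ℕ) (R : Fin s → B), (∀ t, ¬ IsOfFinAddOrder (R t)) →
      LinearIndependent ℤ R → ∀ ℓ : ℕ, ℓ.Prime → ∀ k : Fin s → ℕ,
      {v : V | ∀ t, addOrderOf (r v (R t)) = ℓ ^ k t}.Infinite)
    (n : ℕ) (P Q : Fin n → B)
    (hP : ∀ i, ¬ IsOfFinAddOrder (P i)) (hQ : ∀ i, ¬ IsOfFinAddOrder (Q i))
    (hsupp : ∀ ℓ : ℕ, ℓ.Prime → ∀ m : Fin n → ℕ, (∀ i, 0 < m i) →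
      {v : V | ¬ ((∑ i, m i • r v (P i)) = 0 → (∑ i, m i • r v (Q i)) = 0)}.Finite) :
    ∃ e : ℤ, e ≠ 0 ∧ ∀ i, Q i = e • P i :=
  stmt_9' htors r hmain n P Q hP hQ hsupp
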